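/- For every n ≥ 1 there exists a set B of at most ⌊√(4n+1)⌋ − 1 permutations in S_n, each of which is separable, such that every supersequence of B has length at least Σ_{i=1}^n τ(i), where τ(i) denotes the number of positive divisors of i. -/

import Mathlib

/-- A weakly increasing subsequence of the word `w`, given as a set of positions. -/
def WkInc (w : List ℕ) (S : Finset (Fin w.length)) : Prop :=
  ∀ p ∈ S, ∀ q ∈ S, p < q → w.get p ≤ w.get q

/-- The maximum total number of elements in a union of `d` pairwise disjoint weakly
increasing subsequences of `w`; by Greene's theorem this equals `μ₁ + ⋯ + μ_d` where
`μ = shape(w)` is the RSK shape of `w`. -/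
noncomputable def greene (w : List ℕ) (d : ℕ) : ℕ :=
  sSup {N | ∃ S : Fin d → Finset (Fin w.length),
    (∀ i, WkInc w (S i)) ∧ (∀ i j, i ≠ j → Disjoint (S i) (S j)) ∧
    N = ∑ i, (S i).card}

/-- The `(k+1)`-st part (0-indexed `k`-th part) of the RSK shape of `w`. -/
noncomputable def shapePart (w : List ℕ) (k : ℕ) : ℕ := greene w (k + 1) - greene w k

/-- The word `w` contains the permutation `π` as a pattern. -/
def ContainsPattern {m : ℕ} (π : Equiv.Perm (Fin m)) (w : List ℕ) : Prop :=
  ∃ f : Fin m → Fin w.length, StrictMono f ∧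
    ∀ j k : Fin m,
      (w.get (f j) < w.get (f k) ↔ π j < π k) ∧
      (w.get (f k) < w.get (f j) ↔ π k < π j)

/-- The pattern 3142 (one-line notation), 0-indexed. -/
def p3142 : Equiv.Perm (Fin 4) := ⟨![2,0,3,1], ![1,3,0,2], by decide, by decide⟩

/-- The pattern 2413 (one-line notation), 0-indexed. -/
def p2413 : Equiv.Perm (Fin 4) := ⟨![1,3,0,2], ![2,0,3,1], by decide, by decide⟩

/-- The one-line word of a permutation of `[n] = {1,…,n}`. -/
def permWord {n : ℕ} (σ : Equiv.Perm (Fin n)) : List ℕ :=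
  List.ofFn fun i => (σ i : ℕ) + 1

/-- A permutation is separable iff it avoids both 3142 and 2413. -/
def Separable {n : ℕ} (σ : Equiv.Perm (Fin n)) : Prop :=
  ¬ ContainsPattern p3142 (permWord σ) ∧ ¬ ContainsPattern p2413 (permWord σ)

/-- A (strictly) increasing subsequence of the permutation `σ`, as a set of positions. -/
def IncSubseq {n : ℕ} (σ : Equiv.Perm (Fin n)) (S : Finset (Fin n)) : Prop :=
  ∀ p ∈ S, ∀ q ∈ S, p < q → σ p < σ q

namespace SCS


/-- value at position `p` of the layered word for parameters `n, a` (0-indexed). -/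
def f0 (n a p : ℕ) : ℕ :=
  if p < n % a then n / a * a + p
  else n / a * (a - 1 - (p - n % a) / (n / a)) + (p - n % a) % (n / a)

/-- block index of position `p`. -/
def beta (n a p : ℕ) : ℕ :=
  if p < n % a then 0 else (p - n % a) / (n / a) + 1

lemma f0_lo {n a p : ℕ} (h : p < n % a) : f0 n a p = n / a * a + p := if_pos h

lemma f0_hi {n a p : ℕ} (h : ¬ p < n % a) :
    f0 n a p = n / a * (a - 1 - (p - n % a) / (n / a)) + (p - n % a) % (n / a) := if_neg h

lemma beta_lo {n a p : ℕ} (h : p < n % a) : beta n a p = 0 := if_pos h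

lemma beta_hi {n a p : ℕ} (h : ¬ p < n % a) :
    beta n a p = (p - n % a) / (n / a) + 1 := if_neg h

lemma hdm {n a : ℕ} : n / a * a + n % a = n := by
  have := Nat.div_add_mod n a
  have h2 : a * (n / a) = n / a * a := Nat.mul_comm _ _
  omega

lemma hbb {n a : ℕ} (ha : 1 ≤ a) (han : a ≤ n) : 1 ≤ n / a := (Nat.one_le_div_iff ha).mpr han

lemma quot_le {n a p : ℕ} (ha : 1 ≤ a) (han : a ≤ n) (hp : n % a ≤ p) (hpn : p < n) :
    (p - n % a) / (n / a) ≤ a - 1 := by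
  have hb' := hbb ha han
  have hdm' : n / a * a + n % a = n := hdm
  have h2 : (p - n % a) / (n / a) < a := by
    rw [Nat.div_lt_iff_lt_mul (by omega : 0 < n / a)]
    have : a * (n / a) = n / a * a := Nat.mul_comm _ _
    omega
  omega

lemma mul_block_lt {b k k' Y Y' : ℕ} (h : k' < k) (hY' : Y' < b) : b * k' + Y' < b * k + Y := by
  have h1 : b * k' + Y' < b * k' + b := Nat.add_lt_add_left hY' _
  have h2 : b * k' + b = b * (k' + 1) := by ring
  have h3 : b * (k' + 1) ≤ b * k := Nat.mul_le_mul_left _ h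
  have h4 : b * k ≤ b * k + Y := Nat.le_add_right _ _
  omega

lemma mul_block_lt0 {b k k' Y' : ℕ} (h : k' < k) (hY' : Y' < b) : b * k' + Y' < b * k := by
  have := mul_block_lt (Y := 0) h hY'
  omega

/-- normal form for positions in the block part. -/
lemma f0_hi' {n a p : ℕ} (ha : 1 ≤ a) (han : a ≤ n) (hp : n % a ≤ p) (hpn : p < n) :
    ∃ X Y, X ≤ a - 1 ∧ Y < n / a ∧ p = n % a + n / a * X + Y ∧
      f0 n a p = n / a * (a - 1 - X) + Y ∧ beta n a p = X + 1 := by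
  have hb' := hbb ha han
  refine ⟨(p - n % a) / (n / a), (p - n % a) % (n / a), quot_le ha han hp hpn,
    Nat.mod_lt _ (by omega), ?_, f0_hi (by omega), beta_hi (by omega)⟩
  have := Nat.div_add_mod (p - n % a) (n / a)
  omega

lemma f0_lt_good {n a p : ℕ} (ha : 1 ≤ a) (han : a ≤ n) (hpn : p < n) : f0 n a p < n := by
  have hb' := hbb ha han
  have hdm' : n / a * a + n % a = n := hdm
  by_cases h : p < n % a
  · rw [f0_lo h]; omega
  · obtain ⟨X, Y, hX, hY, hpos, hval, -⟩ := f0_hi' ha han (by omega) hpn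
    rw [hval]
    have h1 : a - 1 - X < a := by omega
    have h2 : n / a * (a - 1 - X) + Y < n / a * a := mul_block_lt0 h1 hY
    omega

lemma beta_mono {n a p q : ℕ} (hpq : p ≤ q) : beta n a p ≤ beta n a q := by
  by_cases h1 : p < n % a
  · rw [beta_lo h1]; omega
  · have h2 : ¬ q < n % a := by omega
    rw [beta_hi h1, beta_hi h2]
    have h3 : p - n % a ≤ q - n % a := by omega
    have := Nat.div_le_div_right (c := n / a) h3
    omega

lemma beta_same {n a p q : ℕ} (ha : 1 ≤ a) (han : a ≤ n) (hpq : p < q) (hqn : q < n)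
    (hβ : beta n a p = beta n a q) : f0 n a p < f0 n a q := by
  have hb' := hbb ha han
  by_cases h1 : p < n % a <;> by_cases h2 : q < n % a
  · rw [f0_lo h1, f0_lo h2]; omega
  · obtain ⟨X, Y, hX, hY, hpos, hval, hbet⟩ := f0_hi' ha han (by omega) hqn
    rw [beta_lo h1, hbet] at hβ
    omega
  · omega
  · obtain ⟨X, Y, hX, hY, hpos, hval, hbet⟩ := f0_hi' ha han (by omega) (by omega : p < n)
    obtain ⟨X', Y', hX', hY', hpos', hval', hbet'⟩ := f0_hi' ha han (by omega) hqn
    rw [hval, hval']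
    rw [hbet, hbet'] at hβ
    have hXX : X = X' := by omega
    subst hXX
    have hYY : Y < Y' := by omega
    exact Nat.add_lt_add_left hYY _

lemma beta_diff {n a p q : ℕ} (ha : 1 ≤ a) (han : a ≤ n) (hpq : p < q) (hqn : q < n)
    (hβ : beta n a p < beta n a q) : f0 n a q < f0 n a p := by
  have hb' := hbb ha han
  have hdm' : n / a * a + n % a = n := hdm
  by_cases h1 : p < n % a <;> by_cases h2 : q < n % a
  · rw [beta_lo h1, beta_lo h2] at hβ; omega
  · obtain ⟨X, Y, hX, hY, hpos, hval, hbet⟩ := f0_hi' ha han (by omega) hqn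
    rw [f0_lo h1, hval]
    have h3 : a - 1 - X < a := by omega
    have h4 : n / a * (a - 1 - X) + Y < n / a * a := mul_block_lt0 h3 hY
    omega
  · omega
  · obtain ⟨X, Y, hX, hY, hpos, hval, hbet⟩ := f0_hi' ha han (by omega) (by omega : p < n)
    obtain ⟨X', Y', hX', hY', hpos', hval', hbet'⟩ := f0_hi' ha han (by omega) hqn
    rw [hval, hval']
    rw [hbet, hbet'] at hβ
    have hXX : X < X' := by omega
    have h3 : a - 1 - X' < a - 1 - X := by omega
    exact mul_block_lt h3 hY'

/-- the value at the word position of block `i`, element `t`. -/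
lemma f0_block {n a i t : ℕ} (ha : 1 ≤ a) (han : a ≤ n) (hi : i < a) (ht : t < n / a) :
    f0 n a (n % a + (a - 1 - i) * (n / a) + t) = n / a * i + t := by
  have hb' := hbb ha han
  rw [f0_hi (by omega)]
  have hx : n % a + (a - 1 - i) * (n / a) + t - n % a = n / a * (a - 1 - i) + t := by
    have : (a - 1 - i) * (n / a) = n / a * (a - 1 - i) := Nat.mul_comm _ _
    omega
  rw [hx, Nat.mul_add_div (by omega), Nat.mul_add_mod]
  rw [Nat.div_eq_of_lt ht, Nat.mod_eq_of_lt ht]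
  have h6 : a - 1 - (a - 1 - i + 0) = i := by omega
  rw [h6]

lemma block_pos_lt {n a i t : ℕ} (ha : 1 ≤ a) (han : a ≤ n) (hi : i < a) (ht : t < n / a) :
    n % a + (a - 1 - i) * (n / a) + t < n := by
  have hb' := hbb ha han
  have hdm' : n / a * a + n % a = n := hdm
  have h1 : (a - 1 - i) * (n / a) + n / a = (a - 1 - i + 1) * (n / a) := by ring
  have h2 : (a - 1 - i + 1) * (n / a) ≤ a * (n / a) := Nat.mul_le_mul_right _ (by omega)
  have h3 : a * (n / a) = n / a * a := Nat.mul_comm _ _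
  omega

lemma f0_deg {n a p : ℕ} (h : a = 0 ∨ n < a) (hp : p < n) : f0 n a p = p := by
  rcases h with h | h
  · subst h
    have : p < n % 0 := by simpa using hp
    rw [f0_lo this]
    simp
  · have h1 : n % a = n := Nat.mod_eq_of_lt h
    have h2 : n / a = 0 := Nat.div_eq_of_lt h
    rw [f0_lo (by omega)]
    simp [h2]

lemma f0_lt {n a p : ℕ} (hp : p < n) : f0 n a p < n := by
  by_cases h : 1 ≤ a ∧ a ≤ n
  · exact f0_lt_good h.1 h.2 hp
  · rw [f0_deg (by omega) hp]; exact hp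

lemma f0_ne {n a p q : ℕ} (hpq : p < q) (hq : q < n) : f0 n a p ≠ f0 n a q := by
  by_cases h : 1 ≤ a ∧ a ≤ n
  · rcases Nat.lt_or_ge (beta n a p) (beta n a q) with hβ | hβ
    · exact Nat.ne_of_gt (beta_diff h.1 h.2 hpq hq hβ)
    · have := beta_mono (n := n) (a := a) (le_of_lt hpq)
      exact Nat.ne_of_lt (beta_same h.1 h.2 hpq hq (by omega))
  · rw [f0_deg (by omega) (by omega), f0_deg (by omega) hq]; omega

/-- the layered permutation. -/
noncomputable def perm (n a : ℕ) : Equiv.Perm (Fin n) :=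
  Equiv.ofBijective (fun p => ⟨f0 n a p, f0_lt p.2⟩)
    (Finite.injective_iff_bijective.mp (by
      intro p q h
      simp only [Fin.mk.injEq] at h
      by_contra hne
      rcases Nat.lt_or_ge (p : ℕ) (q : ℕ) with hlt | hge
      · exact f0_ne hlt q.2 h
      · have hgt : (q : ℕ) < p := by
          rcases Nat.lt_or_ge (q : ℕ) (p : ℕ) with h' | h'
          · exact h'
          · exact absurd (Fin.ext (by omega)) hne
        exact f0_ne hgt p.2 h.symm))

lemma perm_apply (n a : ℕ) (p : Fin n) : (perm n a p : ℕ) = f0 n a p := rfl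

end SCS

namespace SCS

lemma permWord_length {n : ℕ} (σ : Equiv.Perm (Fin n)) : (permWord σ).length = n :=
  List.length_ofFn

lemma permWord_get {n a : ℕ} (p : Fin (permWord (perm n a)).length) :
    (permWord (perm n a)).get p = f0 n a (p : ℕ) + 1 := by
  simp only [permWord, List.get_ofFn]
  exact (List.getElem_ofFn (h := by simpa [permWord] using p.2)).trans rfl

lemma sep_perm {n a : ℕ} (ha : 1 ≤ a) (han : a ≤ n) : Separable (perm n a) := by
  constructor
  · rintro ⟨f, hmono, hiff⟩
    have hen : ∀ j : Fin 4, ((f j : ℕ)) < n := fun j => by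
      have := (f j).isLt
      exact lt_of_lt_of_le this (permWord_length (perm n a)).le
    have hv : ∀ j k : Fin 4, p3142 j < p3142 k → f0 n a (f j : ℕ) < f0 n a (f k : ℕ) := by
      intro j k h
      have h2 := (hiff j k).1.mpr h
      rw [permWord_get, permWord_get] at h2
      omega
    have he01 : ((f 0 : ℕ)) < (f 1 : ℕ) := hmono (by decide)
    have he12 : ((f 1 : ℕ)) < (f 2 : ℕ) := hmono (by decide)
    have he23 : ((f 2 : ℕ)) < (f 3 : ℕ) := hmono (by decide)
    have h02 : f0 n a (f 0 : ℕ) < f0 n a (f 2 : ℕ) := hv 0 2 (by decide)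
    have h30 : f0 n a (f 3 : ℕ) < f0 n a (f 0 : ℕ) := hv 3 0 (by decide)
    have h13 : f0 n a (f 1 : ℕ) < f0 n a (f 3 : ℕ) := hv 1 3 (by decide)
    have hb02 : beta n a (f 0 : ℕ) = beta n a (f 2 : ℕ) := by
      have hle : beta n a (f 0 : ℕ) ≤ beta n a (f 2 : ℕ) := beta_mono (by omega)
      rcases eq_or_lt_of_le hle with h | h
      · exact h
      · exact absurd (beta_diff ha han (by omega) (hen 2) h) (by omega)
    have hb01 : beta n a (f 0 : ℕ) = beta n a (f 1 : ℕ) :=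
      le_antisymm (beta_mono (by omega)) (hb02 ▸ beta_mono (by omega))
    have := beta_same ha han he01 (hen 1) hb01
    omega
  · rintro ⟨f, hmono, hiff⟩
    have hen : ∀ j : Fin 4, ((f j : ℕ)) < n := fun j => by
      have := (f j).isLt
      exact lt_of_lt_of_le this (permWord_length (perm n a)).le
    have hv : ∀ j k : Fin 4, p2413 j < p2413 k → f0 n a (f j : ℕ) < f0 n a (f k : ℕ) := by
      intro j k h
      have h2 := (hiff j k).1.mpr h
      rw [permWord_get, permWord_get] at h2
      omega
    have he01 : ((f 0 : ℕ)) < (f 1 : ℕ) := hmono (by decide)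
    have he12 : ((f 1 : ℕ)) < (f 2 : ℕ) := hmono (by decide)
    have he23 : ((f 2 : ℕ)) < (f 3 : ℕ) := hmono (by decide)
    have h20 : f0 n a (f 2 : ℕ) < f0 n a (f 0 : ℕ) := hv 2 0 (by decide)
    have h03 : f0 n a (f 0 : ℕ) < f0 n a (f 3 : ℕ) := hv 0 3 (by decide)
    have h31 : f0 n a (f 3 : ℕ) < f0 n a (f 1 : ℕ) := hv 3 1 (by decide)
    have hb01 : beta n a (f 0 : ℕ) = beta n a (f 1 : ℕ) := by
      have hle := beta_mono (n := n) (a := a) (le_of_lt he01)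
      rcases eq_or_lt_of_le hle with h | h
      · exact h
      · exact absurd (beta_diff ha han he01 (hen 1) h) (by omega)
    have hb23 : beta n a (f 2 : ℕ) = beta n a (f 3 : ℕ) := by
      have hle := beta_mono (n := n) (a := a) (le_of_lt he23)
      rcases eq_or_lt_of_le hle with h | h
      · exact h
      · exact absurd (beta_diff ha han he23 (hen 3) h) (by omega)
    have hle12 := beta_mono (n := n) (a := a) (le_of_lt he12)
    rcases eq_or_lt_of_le hle12 with h | h
    · have := beta_same ha han he12 (hen 2) h
      omega
    · have hb03 : beta n a (f 0 : ℕ) < beta n a (f 3 : ℕ) := by omega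
      have := beta_diff ha han (by omega) (hen 3) hb03
      omega

end SCS


namespace SCS

/-- a strictly decreasing subsequence of `w`, as a set of positions. -/
def DecChain (w : List ℕ) (C : Finset (Fin w.length)) : Prop :=
  ∀ p ∈ C, ∀ q ∈ C, p < q → w.get q < w.get p

/-- an embedded layered structure: `a` blocks (in reverse order) of `b` increasing elements. -/
def GoodEmb (w : List ℕ) (n k : ℕ) : Prop :=
  ∃ (a b : ℕ) (P : ℕ → ℕ → Fin w.length),
    n / k ≤ a ∧ k ≤ b ∧
    (∀ i t t', i < a → t < t' → t' < b →
      P i t < P i t' ∧ w.get (P i t) < w.get (P i t')) ∧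
    (∀ i t i' t', i' < i → i < a → t < b → t' < b →
      P i t < P i' t' ∧ w.get (P i' t') < w.get (P i t))

lemma goodEmb_of_sublist {n k : ℕ} (hn : 1 ≤ n) (hk1 : 1 ≤ k) (hkn : k ≤ n) {w : List ℕ}
    (hsub : (permWord (perm n (n / k))).Sublist w) : GoodEmb w n k := by
  have ha1 : 1 ≤ n / k := (Nat.one_le_div_iff hk1).mpr hkn
  have han : n / k ≤ n := Nat.div_le_self n k
  set a := n / k with hadef
  have hbk : k ≤ n / a := by
    rw [Nat.le_div_iff_mul_le (by omega : 0 < a)]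
    have := Nat.div_mul_le_self n k
    calc k * a = a * k := Nat.mul_comm _ _
    _ ≤ n := this
  obtain ⟨E, hE⟩ := List.sublist_iff_exists_fin_orderEmbedding_get_eq.mp hsub
  set widx : ℕ → ℕ → Fin (permWord (perm n a)).length := fun i t =>
    if h : i < a ∧ t < n / a
      then ⟨n % a + (a - 1 - i) * (n / a) + t, by
        rw [permWord_length]; exact block_pos_lt ha1 han h.1 h.2⟩
      else ⟨0, by rw [permWord_length]; omega⟩ with hwidx
  have hwval : ∀ i t, i < a → t < n / a →
      w.get (E (widx i t)) = n / a * i + t + 1 := by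
    intro i t hi ht
    rw [← hE]
    have : widx i t = ⟨n % a + (a - 1 - i) * (n / a) + t, by
        rw [permWord_length]; exact block_pos_lt ha1 han hi ht⟩ := by
      rw [hwidx]; exact dif_pos ⟨hi, ht⟩
    rw [this, permWord_get]
    simp only
    rw [f0_block ha1 han hi ht]
  have hwlt : ∀ i t i' t', i < a → t < n / a → i' < a → t' < n / a →
      (n % a + (a - 1 - i) * (n / a) + t < n % a + (a - 1 - i') * (n / a) + t') →
      E (widx i t) < E (widx i' t') := by
    intro i t i' t' hi ht hi' ht' hlt
    have h1 : widx i t = ⟨n % a + (a - 1 - i) * (n / a) + t, by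
        rw [permWord_length]; exact block_pos_lt ha1 han hi ht⟩ := by
      rw [hwidx]; exact dif_pos ⟨hi, ht⟩
    have h2 : widx i' t' = ⟨n % a + (a - 1 - i') * (n / a) + t', by
        rw [permWord_length]; exact block_pos_lt ha1 han hi' ht'⟩ := by
      rw [hwidx]; exact dif_pos ⟨hi', ht'⟩
    have : widx i t < widx i' t' := by
      rw [h1, h2]; exact hlt
    exact E.lt_iff_lt.mpr this
  refine ⟨a, n / a, fun i t => E (widx i t), le_refl _, hbk, ?_, ?_⟩
  · intro i t t' hi htt' ht'
    have ht : t < n / a := by omega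
    constructor
    · apply hwlt i t i t' hi ht hi ht'
      omega
    · rw [hwval i t hi ht, hwval i t' hi ht']
      omega
  · intro i t i' t' hii' hi ht ht'
    have hi'a : i' < a := by omega
    constructor
    · apply hwlt i t i' t' hi ht hi'a ht'
      obtain ⟨ki, hki⟩ : ∃ x, a - 1 - i = x := ⟨_, rfl⟩
      obtain ⟨ki', hki'⟩ : ∃ x, a - 1 - i' = x := ⟨_, rfl⟩
      rw [hki, hki']
      have hkk : ki < ki' := by omega
      have := mul_block_lt (b := n / a) (Y := t') hkk ht
      have c1 : n / a * ki = ki * (n / a) := Nat.mul_comm _ _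
      have c2 : n / a * ki' = ki' * (n / a) := Nat.mul_comm _ _
      omega
    · rw [hwval i t hi ht, hwval i' t' hi'a ht']
      have := mul_block_lt (b := n / a) (Y := t) hii' ht'
      omega

lemma exists_chains {w : List ℕ} {n : ℕ}
    (H : ∀ k, 1 ≤ k → k ≤ n → GoodEmb w n k) :
    ∀ j, j ≤ n → ∃ C : ℕ → Finset (Fin w.length),
      (∀ k, 1 ≤ k → k ≤ j → (DecChain w (C k) ∧ n / k ≤ (C k).card)) ∧
      (∀ k, k = 0 ∨ j < k → C k = ∅) ∧
      (∀ k k', k < k' → Disjoint (C k) (C k')) := by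
  intro j
  induction j with
  | zero => exact fun _ => ⟨fun _ => ∅, by omega, fun _ _ => rfl, by simp⟩
  | succ j ih =>
    intro hj
    obtain ⟨C, hC1, hC2, hC3⟩ := ih (by omega)
    obtain ⟨a, b, P, hna, hkb, hsame, hcross⟩ := H (j + 1) (by omega) hj
    have hfree : ∀ i, ∃ t, i < a → (t < b ∧ ∀ k, P i t ∉ C k) := by
      intro i
      by_cases hi : i < a
      · by_contra hcon
        push_neg at hcon
        have hbad : ∀ t, ∃ k, t < b → P i t ∈ C k := by
          intro t
          by_cases ht : t < b
          · obtain ⟨k, hk⟩ := (hcon t).2 ht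
            exact ⟨k, fun _ => hk⟩
          · exact ⟨0, fun h => absurd h ht⟩
        choose g hg using hbad
        have hmap : ∀ t ∈ Finset.range b, g t ∈ Finset.Icc 1 j := by
          intro t ht
          have hmem := hg t (Finset.mem_range.mp ht)
          by_contra hout
          rw [Finset.mem_Icc] at hout
          have : C (g t) = ∅ := hC2 _ (by omega)
          rw [this] at hmem
          exact absurd hmem (Finset.notMem_empty _)
        have hcard : (Finset.Icc 1 j).card < (Finset.range b).card := by
          rw [Nat.card_Icc, Finset.card_range]
          omega
        obtain ⟨x, hx, y, hy, hxy, hgxy⟩ :=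
          Finset.exists_ne_map_eq_of_card_lt_of_maps_to hcard hmap
        rw [Finset.mem_range] at hx hy
        have hchain : DecChain w (C (g x)) := by
          have := hmap x (Finset.mem_range.mpr hx)
          rw [Finset.mem_Icc] at this
          exact (hC1 _ this.1 this.2).1
        have hmx := hg x hx
        have hmy := hg y hy
        rw [← hgxy] at hmy
        rcases Nat.lt_or_ge x y with hlt | hge
        · obtain ⟨hpos, hval⟩ := hsame i x y hi hlt hy
          exact absurd (hchain _ hmx _ hmy hpos) (by omega)
        · have hlt : y < x := by omega
          obtain ⟨hpos, hval⟩ := hsame i y x hi hlt hx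
          exact absurd (hchain _ hmy _ hmx hpos) (by omega)
      · exact ⟨0, fun h => absurd h hi⟩
    choose T hT using hfree
    set Cnew : Finset (Fin w.length) := (Finset.range a).image (fun i => P i (T i)) with hCnew
    have horder : ∀ i i', i' < i → i < a → P i (T i) < P i' (T i') ∧
        w.get (P i' (T i')) < w.get (P i (T i)) := by
      intro i i' hii' hi
      exact hcross i (T i) i' (T i') hii' hi ((hT i hi).1) ((hT i' (by omega)).1)
    have hchainNew : DecChain w Cnew := by
      intro p hp q hq hpq
      rw [hCnew, Finset.mem_image] at hp hq
      obtain ⟨i, hi, rfl⟩ := hp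
      obtain ⟨i', hi', rfl⟩ := hq
      rw [Finset.mem_range] at hi hi'
      rcases Nat.lt_trichotomy i i' with h | h | h
      · exact absurd ((horder i' i h hi').1) (by omega)
      · subst h; exact absurd hpq (lt_irrefl _)
      · exact (horder i i' h hi).2
    have hcardNew : a ≤ Cnew.card := by
      rw [hCnew]
      rw [Finset.card_image_of_injOn]
      · rw [Finset.card_range]
      · intro x hx y hy hxy
        rw [Finset.mem_coe, Finset.mem_range] at hx hy
        by_contra hne
        rcases Nat.lt_trichotomy x y with h | h | h
        · exact absurd hxy (Fin.ne_of_lt ((horder y x h hy).1)).symm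
        · exact hne h
        · exact absurd hxy (Fin.ne_of_lt ((horder x y h hx).1))
    have hfreeNew : ∀ k, Disjoint Cnew (C k) := by
      intro k
      rw [Finset.disjoint_left]
      intro x hx
      rw [hCnew, Finset.mem_image] at hx
      obtain ⟨i, hi, rfl⟩ := hx
      rw [Finset.mem_range] at hi
      exact (hT i hi).2 k
    refine ⟨fun k => if k = j + 1 then Cnew else C k, ?_, ?_, ?_⟩
    · intro k hk1 hk2
      by_cases hk : k = j + 1
      · subst hk
        dsimp only
        rw [if_pos rfl]
        exact ⟨hchainNew, le_trans hna hcardNew⟩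
      · dsimp only
        rw [if_neg hk]
        exact hC1 k hk1 (by omega)
    · intro k hk
      dsimp only
      rw [if_neg (by omega : ¬ k = j + 1)]
      exact hC2 k (by omega)
    · intro k k' hkk'
      dsimp only
      by_cases h1 : k = j + 1
      · rw [if_pos h1, if_neg (by omega : ¬ k' = j + 1)]
        have : C k' = ∅ := hC2 k' (by omega)
        rw [this]
        exact Finset.disjoint_empty_right _
      · rw [if_neg h1]
        by_cases h2 : k' = j + 1
        · rw [if_pos h2]
          exact (hfreeNew k).symm
        · rw [if_neg h2]
          exact hC3 k k' hkk'

lemma tau_sum (n : ℕ) :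
    ∑ i ∈ Finset.Icc 1 n, (Nat.divisors i).card = ∑ k ∈ Finset.Icc 1 n, n / k := by
  have h0 : Finset.Icc 1 n = Finset.Ioc 0 n := Finset.Icc_add_one_left_eq_Ioc 0 n
  rw [h0]
  have h1 : ∀ i ∈ Finset.Ioc 0 n,
      (Nat.divisors i).card = ((Finset.Ioc 0 n).filter (· ∣ i)).card := by
    intro i hi
    rw [Finset.mem_Ioc] at hi
    congr 1
    ext d
    rw [Nat.mem_divisors, Finset.mem_filter, Finset.mem_Ioc]
    constructor
    · rintro ⟨hd, hne⟩
      exact ⟨⟨Nat.pos_of_dvd_of_pos hd (by omega), le_trans (Nat.le_of_dvd (by omega) hd) hi.2⟩, hd⟩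
    · rintro ⟨-, hd⟩
      exact ⟨hd, by omega⟩
  rw [Finset.sum_congr rfl h1]
  have h2 : ∀ i ∈ Finset.Ioc 0 n, ((Finset.Ioc 0 n).filter (· ∣ i)).card
      = ∑ d ∈ Finset.Ioc 0 n, if d ∣ i then 1 else 0 := by
    intro i _
    rw [Finset.card_filter]
  rw [Finset.sum_congr rfl h2, Finset.sum_comm]
  apply Finset.sum_congr rfl
  intro d _
  rw [← Finset.card_filter]
  exact Nat.Ioc_filter_dvd_card_eq_div n d

end SCS

/-- For every `n ≥ 1` there is a set `B` of at most `⌊√(4n+1)⌋ - 1` separable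
permutations of `[n]` such that every supersequence of `B` has length at least
`∑_{i=1}^n τ(i)`, where `τ(i)` is the number of positive divisors of `i`. -/
theorem exists_separable_family_long_supersequence (n : ℕ) (hn : 1 ≤ n) :
    ∃ B : Finset (Equiv.Perm (Fin n)),
      B.card ≤ Nat.sqrt (4 * n + 1) - 1 ∧
      (∀ σ ∈ B, Separable σ) ∧
      ∀ w : List ℕ, (∀ x ∈ w, 0 < x) → (∀ σ ∈ B, (permWord σ).Sublist w) →
        (∑ i ∈ Finset.Icc 1 n, (Nat.divisors i).card) ≤ w.length := by
  classical
  refine ⟨((Finset.Icc 1 n).image (fun j => n / j)).image (fun a => SCS.perm n a), ?_, ?_, ?_⟩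
  · -- cardinality bound
    apply le_trans Finset.card_image_le
    obtain ⟨s, hs⟩ : ∃ s, Nat.sqrt n = s := ⟨_, rfl⟩
    obtain ⟨q, hqdef⟩ : ∃ q, n / (s + 1) = q := ⟨_, rfl⟩
    have hsubV : (Finset.Icc 1 n).image (fun j => n / j) ⊆
        Finset.Icc 1 s ∪ (Finset.Icc 1 q).image (fun j => n / j) := by
      intro v hv
      rw [Finset.mem_image] at hv
      obtain ⟨j, hj, rfl⟩ := hv
      rw [Finset.mem_Icc] at hj
      by_cases hle : n / j ≤ s
      · apply Finset.mem_union_left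
        rw [Finset.mem_Icc]
        exact ⟨(Nat.one_le_div_iff (by omega)).mpr hj.2, hle⟩
      · apply Finset.mem_union_right
        rw [Finset.mem_image]
        refine ⟨j, ?_, rfl⟩
        rw [Finset.mem_Icc]
        refine ⟨hj.1, ?_⟩
        rw [← hqdef, Nat.le_div_iff_mul_le (Nat.succ_pos s)]
        have h2 : s + 1 ≤ n / j := by omega
        have h3 := (Nat.le_div_iff_mul_le (by omega : 0 < j)).mp h2
        calc j * (s+1) = (s+1) * j := Nat.mul_comm _ _
        _ ≤ n := h3
    have hcV : ((Finset.Icc 1 n).image (fun j => n / j)).card ≤ s + q := by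
      have hc3 := Finset.card_image_le (s := Finset.Icc 1 q) (f := fun j => n / j)
      have hc4 : (Finset.Icc 1 s).card = s := by rw [Nat.card_Icc]; omega
      have hc5 : (Finset.Icc 1 q).card = q := by rw [Nat.card_Icc]; omega
      calc ((Finset.Icc 1 n).image (fun j => n / j)).card
          ≤ (Finset.Icc 1 s ∪ (Finset.Icc 1 q).image (fun j => n / j)).card :=
            Finset.card_le_card hsubV
      _ ≤ (Finset.Icc 1 s).card + ((Finset.Icc 1 q).image (fun j => n / j)).card :=
            Finset.card_union_le _ _
      _ ≤ s + q := by omega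
    have hq : q ≤ s := by
      have h1 := Nat.lt_succ_sqrt n
      rw [hs] at h1
      have h2 : n / (s + 1) < s + 1 := by
        rw [Nat.div_lt_iff_lt_mul (Nat.succ_pos s)]
        simpa [Nat.succ_eq_add_one] using h1
      omega
    have key : s + q + 1 ≤ Nat.sqrt (4 * n + 1) := by
      rw [Nat.le_sqrt]
      have h1 : q * (s+1) ≤ n := by
        rw [← hqdef]; exact Nat.div_mul_le_self n (s+1)
      have h2 : s * s ≤ n := by
        have := Nat.sqrt_le n
        rwa [hs] at this
      rcases eq_or_lt_of_le hq with h | h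
      · rw [h] at h1 ⊢
        have e1 : (s + s + 1) * (s + s + 1) = 4 * (s * (s+1)) + 1 := by ring
        omega
      · have h3 : s + q + 1 ≤ 2 * s := by omega
        have h4 : (s + q + 1) * (s + q + 1) ≤ (2 * s) * (2 * s) := Nat.mul_le_mul h3 h3
        have h5 : (2 * s) * (2 * s) = 4 * (s * s) := by ring
        omega
    omega
  · -- separability
    intro σ hσ
    rw [Finset.mem_image] at hσ
    obtain ⟨a, ha, rfl⟩ := hσ
    rw [Finset.mem_image] at ha
    obtain ⟨j, hj, rfl⟩ := ha
    rw [Finset.mem_Icc] at hj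
    exact SCS.sep_perm ((Nat.one_le_div_iff (by omega)).mpr hj.2) (Nat.div_le_self n j)
  · -- length lower bound
    intro w hpos hsup
    have H : ∀ k, 1 ≤ k → k ≤ n → SCS.GoodEmb w n k := by
      intro k h1 h2
      apply SCS.goodEmb_of_sublist hn h1 h2
      apply hsup
      rw [Finset.mem_image]
      exact ⟨n / k, Finset.mem_image.mpr ⟨k, Finset.mem_Icc.mpr ⟨h1, h2⟩, rfl⟩, rfl⟩
    obtain ⟨C, hC1, hC2, hC3⟩ := SCS.exists_chains H n (le_refl n)
    have hdisj : ∀ x ∈ Finset.Icc 1 n, ∀ y ∈ Finset.Icc 1 n, x ≠ y → Disjoint (C x) (C y) := by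
      intro x _ y _ hxy
      rcases Nat.lt_or_ge x y with h | h
      · exact hC3 x y h
      · exact (hC3 y x (by omega)).symm
    calc ∑ i ∈ Finset.Icc 1 n, (Nat.divisors i).card
        = ∑ k ∈ Finset.Icc 1 n, n / k := SCS.tau_sum n
    _ ≤ ∑ k ∈ Finset.Icc 1 n, (C k).card := by
        apply Finset.sum_le_sum
        intro k hk
        rw [Finset.mem_Icc] at hk
        exact (hC1 k hk.1 hk.2).2
    _ = ((Finset.Icc 1 n).biUnion C).card := (Finset.card_biUnion hdisj).symm
    _ ≤ (Finset.univ : Finset (Fin w.length)).card :=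
        Finset.card_le_card (Finset.subset_univ _)
    _ = w.length := by rw [Finset.card_univ, Fintype.card_fin]
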